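/- Every 1-dimensional linear subspace of ℂ³ that is contained in at least two of the nine hyperplanes H_{ζ}^{xy}, H_{ζ}^{yz}, H_{ζ}^{xz} (ζ ∈ μ₃) is contained in exactly three of them, and there are exactly 12 such subspaces. In other words, the projective line arrangement in ℙ² defined by f = (x³−y³)(y³−z³)(x³−z³) has no double points and exactly 12 singular points, all of multiplicity 3. -/

import Mathlib

open Complex

noncomputable section

namespace G31Lines

/-- Vectors in `ℂ³`. -/
abbrev V3 : Type := Fin 3 → ℂ

/-- `μ₃ ⊂ ℂ`, the group of third roots of unity. -/
def mu3 : Set ℂ := {z : ℂ | z ^ 3 = 1}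

/-- `H_ζ^{xy} = {x − ζy = 0}`. -/
def Hxy (ζ : ℂ) : Set V3 := {v | v 0 - ζ * v 1 = 0}

/-- `H_ζ^{yz} = {y − ζz = 0}`. -/
def Hyz (ζ : ℂ) : Set V3 := {v | v 1 - ζ * v 2 = 0}

/-- `H_ζ^{xz} = {x − ζz = 0}`. -/
def Hxz (ζ : ℂ) : Set V3 := {v | v 0 - ζ * v 2 = 0}

/-- The nine hyperplanes of the arrangement `(x³−y³)(y³−z³)(x³−z³) = 0`. -/
def Hyps : Set (Set V3) :=
  {H | ∃ ζ ∈ mu3, H = Hxy ζ ∨ H = Hyz ζ ∨ H = Hxz ζ}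

/-- The multiplicity of a 1-dimensional subspace `p ⊂ ℂ³`: the number of the nine
hyperplanes containing it. -/
noncomputable def multP (p : Submodule ℂ V3) : ℕ :=
  {H | H ∈ Hyps ∧ (p : Set V3) ⊆ H}.ncard

/-! ### Auxiliary material -/

lemma mu3_eq : mu3 = ↑(Polynomial.nthRootsFinset 3 (1 : ℂ)) := by
  ext z; simp [mu3, Polynomial.mem_nthRootsFinset (by norm_num : 0 < 3) (1 : ℂ)]

lemma mu3_finite : mu3.Finite := by
  rw [mu3_eq]; exact (Polynomial.nthRootsFinset 3 (1 : ℂ)).finite_toSet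

lemma mu3_ncard : mu3.ncard = 3 := by
  rw [mu3_eq, Set.ncard_coe_finset]
  exact (Complex.isPrimitiveRoot_exp 3 (by norm_num)).card_nthRootsFinset

lemma mu3_ne_zero {ζ : ℂ} (h : ζ ∈ mu3) : ζ ≠ 0 := by
  intro h0; rw [h0] at h; simp [mu3] at h

lemma mem_Hxy {v : V3} {ζ : ℂ} : v ∈ Hxy ζ ↔ v 0 = ζ * v 1 := by
  simp [Hxy, sub_eq_zero]

lemma mem_Hyz {v : V3} {ζ : ℂ} : v ∈ Hyz ζ ↔ v 1 = ζ * v 2 := by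
  simp [Hyz, sub_eq_zero]

lemma mem_Hxz {v : V3} {ζ : ℂ} : v ∈ Hxz ζ ↔ v 0 = ζ * v 2 := by
  simp [Hxz, sub_eq_zero]

/-- Shorthand for spans. -/
abbrev sp (v : V3) : Submodule ℂ V3 := Submodule.span ℂ {v}

lemma mem_sp {v w : V3} : w ∈ (sp v) ↔ ∃ c : ℂ, c • v = w :=
  Submodule.mem_span_singleton

lemma smul_apply' (c : ℂ) (v : V3) (i : Fin 3) : (c • v) i = c * v i := rfl

lemma span_sub_Hxy {v : V3} {ζ : ℂ} : ((sp v) : Set V3) ⊆ Hxy ζ ↔ v ∈ Hxy ζ := by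
  constructor
  · intro h; exact h (Submodule.mem_span_singleton_self v)
  · intro h w hw
    obtain ⟨c, rfl⟩ := mem_sp.mp hw
    have h' : v 0 - ζ * v 1 = 0 := h
    show (c • v) 0 - ζ * (c • v) 1 = 0
    rw [smul_apply', smul_apply']; linear_combination c * h'

lemma span_sub_Hyz {v : V3} {ζ : ℂ} : ((sp v) : Set V3) ⊆ Hyz ζ ↔ v ∈ Hyz ζ := by
  constructor
  · intro h; exact h (Submodule.mem_span_singleton_self v)
  · intro h w hw
    obtain ⟨c, rfl⟩ := mem_sp.mp hw
    have h' : v 1 - ζ * v 2 = 0 := h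
    show (c • v) 1 - ζ * (c • v) 2 = 0
    rw [smul_apply', smul_apply']; linear_combination c * h'

lemma span_sub_Hxz {v : V3} {ζ : ℂ} : ((sp v) : Set V3) ⊆ Hxz ζ ↔ v ∈ Hxz ζ := by
  constructor
  · intro h; exact h (Submodule.mem_span_singleton_self v)
  · intro h w hw
    obtain ⟨c, rfl⟩ := mem_sp.mp hw
    have h' : v 0 - ζ * v 2 = 0 := h
    show (c • v) 0 - ζ * (c • v) 2 = 0
    rw [smul_apply', smul_apply']; linear_combination c * h'

/-! Distinctness of the hyperplanes. -/

lemma Hxy_inj : Function.Injective Hxy := by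
  intro a b h
  have : (![a, 1, 0] : V3) ∈ Hxy b := by rw [← h]; simp [mem_Hxy]
  rw [mem_Hxy] at this; simpa [sub_eq_zero] using this

lemma Hyz_inj : Function.Injective Hyz := by
  intro a b h
  have : (![0, a, 1] : V3) ∈ Hyz b := by rw [← h]; simp [mem_Hyz]
  rw [mem_Hyz] at this; simpa [sub_eq_zero] using this

lemma Hxz_inj : Function.Injective Hxz := by
  intro a b h
  have : (![a, 0, 1] : V3) ∈ Hxz b := by rw [← h]; simp [mem_Hxz]
  rw [mem_Hxz] at this; simpa [sub_eq_zero] using this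

lemma Hxy_ne_Hyz {a b : ℂ} (hb : b ≠ 0) : Hxy a ≠ Hyz b := by
  intro h
  have : (![0, 0, 1] : V3) ∈ Hyz b := by rw [← h]; simp [mem_Hxy]
  rw [mem_Hyz] at this; simp at this; exact hb this.symm

lemma Hxy_ne_Hxz {a b : ℂ} (hb : b ≠ 0) : Hxy a ≠ Hxz b := by
  intro h
  have : (![b, 0, 1] : V3) ∈ Hxy a := by rw [h]; simp [mem_Hxz]
  rw [mem_Hxy] at this; simp [hb] at this

lemma Hyz_ne_Hxz {a b : ℂ} : Hyz a ≠ Hxz b := by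
  intro h
  have : (![1, 0, 0] : V3) ∈ Hxz b := by rw [← h]; simp [mem_Hyz]
  rw [mem_Hxz] at this; simp at this

/-- The set of hyperplanes containing the span of `v`. -/
def M (v : V3) : Set (Set V3) := {H | H ∈ Hyps ∧ ((sp v) : Set V3) ⊆ H}

lemma multP_span (v : V3) : multP (sp v) = (M v).ncard := rfl

lemma mem_M {v : V3} {H : Set V3} :
    H ∈ M v ↔ ∃ ζ ∈ mu3, (H = Hxy ζ ∧ v ∈ Hxy ζ) ∨ (H = Hyz ζ ∧ v ∈ Hyz ζ) ∨
      (H = Hxz ζ ∧ v ∈ Hxz ζ) := by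
  constructor
  · rintro ⟨⟨ζ, hζ, (rfl | rfl | rfl)⟩, hsub⟩
    · exact ⟨ζ, hζ, Or.inl ⟨rfl, span_sub_Hxy.mp hsub⟩⟩
    · exact ⟨ζ, hζ, Or.inr (Or.inl ⟨rfl, span_sub_Hyz.mp hsub⟩)⟩
    · exact ⟨ζ, hζ, Or.inr (Or.inr ⟨rfl, span_sub_Hxz.mp hsub⟩)⟩
  · rintro ⟨ζ, hζ, (⟨rfl, hm⟩ | ⟨rfl, hm⟩ | ⟨rfl, hm⟩)⟩
    · exact ⟨⟨ζ, hζ, Or.inl rfl⟩, span_sub_Hxy.mpr hm⟩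
    · exact ⟨⟨ζ, hζ, Or.inr (Or.inl rfl)⟩, span_sub_Hyz.mpr hm⟩
    · exact ⟨⟨ζ, hζ, Or.inr (Or.inr rfl)⟩, span_sub_Hxz.mpr hm⟩

lemma Hyps_finite : Hyps.Finite := by
  have : Hyps ⊆ (Hxy '' mu3) ∪ (Hyz '' mu3) ∪ (Hxz '' mu3) := by
    rintro H ⟨ζ, hζ, (rfl | rfl | rfl)⟩
    · exact Or.inl (Or.inl ⟨ζ, hζ, rfl⟩)
    · exact Or.inl (Or.inr ⟨ζ, hζ, rfl⟩)
    · exact Or.inr ⟨ζ, hζ, rfl⟩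
  exact Set.Finite.subset (((mu3_finite.image _).union (mu3_finite.image _)).union
    (mu3_finite.image _)) this

lemma M_finite (v : V3) : (M v).Finite :=
  Hyps_finite.subset fun _ h => h.1

/-! ### Computation of `M v` in the several cases -/

/-- Case: `v = (0,0,c)` with `c ≠ 0`. -/
lemma M_caseA_xy {v : V3} (h0 : v 0 = 0) (h1 : v 1 = 0) (h2 : v 2 ≠ 0) :
    M v = Hxy '' mu3 := by
  ext H
  rw [mem_M]
  constructor
  · rintro ⟨ζ, hζ, (⟨rfl, _⟩ | ⟨rfl, hm⟩ | ⟨rfl, hm⟩)⟩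
    · exact ⟨ζ, hζ, rfl⟩
    · rw [mem_Hyz, h1] at hm
      exact absurd hm.symm (mul_ne_zero (mu3_ne_zero hζ) h2)
    · rw [mem_Hxz, h0] at hm
      exact absurd hm.symm (mul_ne_zero (mu3_ne_zero hζ) h2)
  · rintro ⟨ζ, hζ, rfl⟩
    exact ⟨ζ, hζ, Or.inl ⟨rfl, by rw [mem_Hxy, h0, h1, mul_zero]⟩⟩

/-- Case: `v = (a,0,0)` with `a ≠ 0`. -/
lemma M_caseA_yz {v : V3} (h0 : v 0 ≠ 0) (h1 : v 1 = 0) (h2 : v 2 = 0) :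
    M v = Hyz '' mu3 := by
  ext H
  rw [mem_M]
  constructor
  · rintro ⟨ζ, hζ, (⟨rfl, hm⟩ | ⟨rfl, _⟩ | ⟨rfl, hm⟩)⟩
    · rw [mem_Hxy, h1, mul_zero] at hm; exact absurd hm h0
    · exact ⟨ζ, hζ, rfl⟩
    · rw [mem_Hxz, h2, mul_zero] at hm; exact absurd hm h0
  · rintro ⟨ζ, hζ, rfl⟩
    exact ⟨ζ, hζ, Or.inr (Or.inl ⟨rfl, by rw [mem_Hyz, h1, h2, mul_zero]⟩)⟩

/-- Case: `v = (0,b,0)` with `b ≠ 0`. -/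
lemma M_caseA_xz {v : V3} (h0 : v 0 = 0) (h1 : v 1 ≠ 0) (h2 : v 2 = 0) :
    M v = Hxz '' mu3 := by
  ext H
  rw [mem_M]
  constructor
  · rintro ⟨ζ, hζ, (⟨rfl, hm⟩ | ⟨rfl, hm⟩ | ⟨rfl, _⟩)⟩
    · rw [mem_Hxy, h0] at hm
      exact absurd hm.symm (mul_ne_zero (mu3_ne_zero hζ) h1)
    · rw [mem_Hyz, h2, mul_zero] at hm; exact absurd hm h1
    · exact ⟨ζ, hζ, rfl⟩
  · rintro ⟨ζ, hζ, rfl⟩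
    exact ⟨ζ, hζ, Or.inr (Or.inr ⟨rfl, by rw [mem_Hxz, h0, h2, mul_zero]⟩)⟩

/-- Case: all coordinates nonzero with equal cubes. -/
lemma M_caseB {v : V3} (h0 : v 0 ≠ 0) (h1 : v 1 ≠ 0) (h2 : v 2 ≠ 0)
    (e01 : v 0 ^ 3 = v 1 ^ 3) (e12 : v 1 ^ 3 = v 2 ^ 3) :
    M v = {Hxy (v 0 / v 1), Hyz (v 1 / v 2), Hxz (v 0 / v 2)} := by
  ext H
  rw [mem_M]
  constructor
  · rintro ⟨ζ, hζ, (⟨rfl, hm⟩ | ⟨rfl, hm⟩ | ⟨rfl, hm⟩)⟩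
    · rw [mem_Hxy] at hm
      have : ζ = v 0 / v 1 := by field_simp [hm]; exact hm.symm
      exact Or.inl (by rw [this])
    · rw [mem_Hyz] at hm
      have : ζ = v 1 / v 2 := by field_simp [hm]; exact hm.symm
      exact Or.inr (Or.inl (by rw [this]))
    · rw [mem_Hxz] at hm
      have : ζ = v 0 / v 2 := by field_simp [hm]; exact hm.symm
      exact Or.inr (Or.inr (by simp [this]))
  · rintro (rfl | rfl | rfl)
    · refine ⟨v 0 / v 1, ?_, Or.inl ⟨rfl, by rw [mem_Hxy]; field_simp⟩⟩
      show (v 0 / v 1) ^ 3 = 1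
      rw [div_pow, e01, div_self (pow_ne_zero 3 h1)]
    · refine ⟨v 1 / v 2, ?_, Or.inr (Or.inl ⟨rfl, by rw [mem_Hyz]; field_simp⟩)⟩
      show (v 1 / v 2) ^ 3 = 1
      rw [div_pow, e12, div_self (pow_ne_zero 3 h2)]
    · refine ⟨v 0 / v 2, ?_, Or.inr (Or.inr ⟨rfl, by rw [mem_Hxz]; field_simp⟩)⟩
      show (v 0 / v 2) ^ 3 = 1
      rw [div_pow, e01, e12, div_self (pow_ne_zero 3 h2)]

lemma ncard_caseB {a b c : ℂ} (hb : b ≠ 0) (hc : c ≠ 0) :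
    ({Hxy a, Hyz b, Hxz c} : Set (Set V3)).ncard = 3 := by
  rw [Set.ncard_insert_of_notMem ?_ ((Set.finite_singleton _).insert _),
    Set.ncard_pair Hyz_ne_Hxz]
  rintro (h | h)
  · exact Hxy_ne_Hyz hb h
  · exact Hxy_ne_Hxz hc h

/-! ### Classification of vectors with multiplicity at least 2 -/

lemma v_ne_zero_iff {v : V3} : v ≠ 0 ↔ ¬(v 0 = 0 ∧ v 1 = 0 ∧ v 2 = 0) := by
  constructor
  · intro hv h
    exact hv (funext fun i => by fin_cases i <;> simp [h.1, h.2.1, h.2.2])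
  · intro h hv
    exact h ⟨by rw [hv]; rfl, by rw [hv]; rfl, by rw [hv]; rfl⟩

lemma classification {v : V3} (hv : v ≠ 0) (h2 : 2 ≤ (M v).ncard) :
    (v 0 = 0 ∧ v 1 = 0 ∧ v 2 ≠ 0) ∨ (v 0 ≠ 0 ∧ v 1 = 0 ∧ v 2 = 0) ∨
    (v 0 = 0 ∧ v 1 ≠ 0 ∧ v 2 = 0) ∨
    (v 0 ≠ 0 ∧ v 1 ≠ 0 ∧ v 2 ≠ 0 ∧ v 0 ^ 3 = v 1 ^ 3 ∧ v 1 ^ 3 = v 2 ^ 3) := by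
  obtain ⟨H1, hH1, H2, hH2, hne⟩ :=
    (Set.one_lt_ncard (M_finite v)).mp (by omega)
  rw [mem_M] at hH1 hH2
  obtain ⟨ζ₁, hζ₁, c1⟩ := hH1
  obtain ⟨ζ₂, hζ₂, c2⟩ := hH2
  have hvz := v_ne_zero_iff.mp hv
  -- helper facts for mixed cases
  have mixed : ∀ (i j : Fin 3) (α β : ℂ), α ∈ mu3 → β ∈ mu3 →
      True := fun _ _ _ _ _ _ => trivial
  clear mixed
  rcases c1 with ⟨rfl, m1⟩ | ⟨rfl, m1⟩ | ⟨rfl, m1⟩ <;>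
    rcases c2 with ⟨h2eq, m2⟩ | ⟨h2eq, m2⟩ | ⟨h2eq, m2⟩
  -- xy, xy
  · have hzz : ζ₁ ≠ ζ₂ := fun h => hne (by rw [h, h2eq])
    subst h2eq
    rw [mem_Hxy] at m1 m2
    have hv1 : v 1 = 0 := by
      by_contra h
      exact hzz (mul_right_cancel₀ h (m1.symm.trans m2))
    have hv0 : v 0 = 0 := by rw [m1, hv1, mul_zero]
    have hv2 : v 2 ≠ 0 := fun h => hvz ⟨hv0, hv1, h⟩
    exact Or.inl ⟨hv0, hv1, hv2⟩
  -- xy, yz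
  · subst h2eq
    rw [mem_Hxy] at m1; rw [mem_Hyz] at m2
    have hv2 : v 2 ≠ 0 := by
      intro h
      exact hvz ⟨by rw [m1, m2, h]; ring, by rw [m2, h, mul_zero], h⟩
    have hv1 : v 1 ≠ 0 := by rw [m2]; exact mul_ne_zero (mu3_ne_zero hζ₂) hv2
    have hv0 : v 0 ≠ 0 := by rw [m1]; exact mul_ne_zero (mu3_ne_zero hζ₁) hv1
    refine Or.inr (Or.inr (Or.inr ⟨hv0, hv1, hv2, ?_, ?_⟩))
    · rw [m1, mul_pow, hζ₁, one_mul]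
    · rw [m2, mul_pow, hζ₂, one_mul]
  -- xy, xz
  · subst h2eq
    rw [mem_Hxy] at m1; rw [mem_Hxz] at m2
    have hv0 : v 0 ≠ 0 := by
      intro h
      refine hvz ⟨h, ?_, ?_⟩
      · have := m1; rw [h] at this
        exact (mul_eq_zero.mp this.symm).resolve_left (mu3_ne_zero hζ₁)
      · have := m2; rw [h] at this
        exact (mul_eq_zero.mp this.symm).resolve_left (mu3_ne_zero hζ₂)
    have hv1 : v 1 ≠ 0 := fun h => hv0 (by rw [m1, h, mul_zero])
    have hv2 : v 2 ≠ 0 := fun h => hv0 (by rw [m2, h, mul_zero])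
    refine Or.inr (Or.inr (Or.inr ⟨hv0, hv1, hv2, ?_, ?_⟩))
    · rw [m1, mul_pow, hζ₁, one_mul]
    · have e1 : v 0 ^ 3 = v 1 ^ 3 := by rw [m1, mul_pow, hζ₁, one_mul]
      have e2 : v 0 ^ 3 = v 2 ^ 3 := by rw [m2, mul_pow, hζ₂, one_mul]
      rw [← e1, e2]
  -- yz, xy  (symmetric to xy, yz)
  · subst h2eq
    rw [mem_Hyz] at m1; rw [mem_Hxy] at m2
    have hv2 : v 2 ≠ 0 := by
      intro h
      exact hvz ⟨by rw [m2, m1, h]; ring, by rw [m1, h, mul_zero], h⟩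
    have hv1 : v 1 ≠ 0 := by rw [m1]; exact mul_ne_zero (mu3_ne_zero hζ₁) hv2
    have hv0 : v 0 ≠ 0 := by rw [m2]; exact mul_ne_zero (mu3_ne_zero hζ₂) hv1
    refine Or.inr (Or.inr (Or.inr ⟨hv0, hv1, hv2, ?_, ?_⟩))
    · rw [m2, mul_pow, hζ₂, one_mul]
    · rw [m1, mul_pow, hζ₁, one_mul]
  -- yz, yz
  · have hzz : ζ₁ ≠ ζ₂ := fun h => hne (by rw [h, h2eq])
    subst h2eq
    rw [mem_Hyz] at m1 m2
    have hv2 : v 2 = 0 := by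
      by_contra h
      exact hzz (mul_right_cancel₀ h (m1.symm.trans m2))
    have hv1 : v 1 = 0 := by rw [m1, hv2, mul_zero]
    have hv0 : v 0 ≠ 0 := fun h => hvz ⟨h, hv1, hv2⟩
    exact Or.inr (Or.inl ⟨hv0, hv1, hv2⟩)
  -- yz, xz
  · subst h2eq
    rw [mem_Hyz] at m1; rw [mem_Hxz] at m2
    have hv2 : v 2 ≠ 0 := by
      intro h
      exact hvz ⟨by rw [m2, h, mul_zero], by rw [m1, h, mul_zero], h⟩
    have hv1 : v 1 ≠ 0 := by rw [m1]; exact mul_ne_zero (mu3_ne_zero hζ₁) hv2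
    have hv0 : v 0 ≠ 0 := by rw [m2]; exact mul_ne_zero (mu3_ne_zero hζ₂) hv2
    refine Or.inr (Or.inr (Or.inr ⟨hv0, hv1, hv2, ?_, ?_⟩))
    · have e1 : v 1 ^ 3 = v 2 ^ 3 := by rw [m1, mul_pow, hζ₁, one_mul]
      have e2 : v 0 ^ 3 = v 2 ^ 3 := by rw [m2, mul_pow, hζ₂, one_mul]
      rw [e1, e2]
    · rw [m1, mul_pow, hζ₁, one_mul]
  -- xz, xy
  · subst h2eq
    rw [mem_Hxz] at m1; rw [mem_Hxy] at m2
    have hv0 : v 0 ≠ 0 := by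
      intro h
      refine hvz ⟨h, ?_, ?_⟩
      · have := m2; rw [h] at this
        exact (mul_eq_zero.mp this.symm).resolve_left (mu3_ne_zero hζ₂)
      · have := m1; rw [h] at this
        exact (mul_eq_zero.mp this.symm).resolve_left (mu3_ne_zero hζ₁)
    have hv1 : v 1 ≠ 0 := fun h => hv0 (by rw [m2, h, mul_zero])
    have hv2 : v 2 ≠ 0 := fun h => hv0 (by rw [m1, h, mul_zero])
    refine Or.inr (Or.inr (Or.inr ⟨hv0, hv1, hv2, ?_, ?_⟩))
    · rw [m2, mul_pow, hζ₂, one_mul]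
    · have e1 : v 0 ^ 3 = v 1 ^ 3 := by rw [m2, mul_pow, hζ₂, one_mul]
      have e2 : v 0 ^ 3 = v 2 ^ 3 := by rw [m1, mul_pow, hζ₁, one_mul]
      rw [← e1, e2]
  -- xz, yz
  · subst h2eq
    rw [mem_Hxz] at m1; rw [mem_Hyz] at m2
    have hv2 : v 2 ≠ 0 := by
      intro h
      exact hvz ⟨by rw [m1, h, mul_zero], by rw [m2, h, mul_zero], h⟩
    have hv1 : v 1 ≠ 0 := by rw [m2]; exact mul_ne_zero (mu3_ne_zero hζ₂) hv2
    have hv0 : v 0 ≠ 0 := by rw [m1]; exact mul_ne_zero (mu3_ne_zero hζ₁) hv2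
    refine Or.inr (Or.inr (Or.inr ⟨hv0, hv1, hv2, ?_, ?_⟩))
    · have e1 : v 1 ^ 3 = v 2 ^ 3 := by rw [m2, mul_pow, hζ₂, one_mul]
      have e2 : v 0 ^ 3 = v 2 ^ 3 := by rw [m1, mul_pow, hζ₁, one_mul]
      rw [e1, e2]
    · rw [m2, mul_pow, hζ₂, one_mul]
  -- xz, xz
  · have hzz : ζ₁ ≠ ζ₂ := fun h => hne (by rw [h, h2eq])
    subst h2eq
    rw [mem_Hxz] at m1 m2
    have hv2 : v 2 = 0 := by
      by_contra h
      exact hzz (mul_right_cancel₀ h (m1.symm.trans m2))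
    have hv0 : v 0 = 0 := by rw [m1, hv2, mul_zero]
    have hv1 : v 1 ≠ 0 := fun h => hvz ⟨hv0, h, hv2⟩
    exact Or.inr (Or.inr (Or.inl ⟨hv0, hv1, hv2⟩))

/-- In every case of the classification, the multiplicity is 3. -/
lemma ncard_M_eq_three {v : V3} (hv : v ≠ 0) (h2 : 2 ≤ (M v).ncard) :
    (M v).ncard = 3 := by
  rcases classification hv h2 with ⟨h0, h1, h2'⟩ | ⟨h0, h1, h2'⟩ | ⟨h0, h1, h2'⟩ |
    ⟨h0, h1, h2', e01, e12⟩
  · rw [M_caseA_xy h0 h1 h2', Set.ncard_image_of_injective _ Hxy_inj, mu3_ncard]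
  · rw [M_caseA_yz h0 h1 h2', Set.ncard_image_of_injective _ Hyz_inj, mu3_ncard]
  · rw [M_caseA_xz h0 h1 h2', Set.ncard_image_of_injective _ Hxz_inj, mu3_ncard]
  · rw [M_caseB h0 h1 h2' e01 e12]
    exact ncard_caseB (div_ne_zero h1 h2') (div_ne_zero h0 h2')

/-- Every 1-dimensional subspace is a span of a nonzero vector. -/
lemma exists_span {p : Submodule ℂ V3} (h : Module.finrank ℂ p = 1) :
    ∃ v : V3, v ≠ 0 ∧ p = (sp v) := by
  obtain ⟨v, hv0, hv⟩ := finrank_eq_one_iff'.mp h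
  refine ⟨(v : V3), by simpa using hv0, le_antisymm ?_ ?_⟩
  · intro w hw
    obtain ⟨c, hc⟩ := hv ⟨w, hw⟩
    exact Submodule.mem_span_singleton.mpr ⟨c, congrArg Subtype.val hc⟩
  · rw [Submodule.span_le, Set.singleton_subset_iff]; exact v.2

/-! ### The twelve singular points -/

lemma span_eq_cases {v w : V3} (h : (sp v) = (sp w)) : ∃ c : ℂ, c • w = v :=
  mem_sp.mp (h ▸ Submodule.mem_span_singleton_self v)

lemma vec_ne_zero {a b : ℂ} : (![a, b, 1] : V3) ≠ 0 := by
  intro h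
  have : (![a, b, 1] : V3) 2 = 0 := by rw [h]; rfl
  simp at this

lemma e0_ne_zero : (![1, 0, 0] : V3) ≠ 0 := by
  intro h
  have : (![(1:ℂ), 0, 0] : V3) 0 = 0 := by rw [h]; rfl
  simp at this

lemma e1_ne_zero : (![0, 1, 0] : V3) ≠ 0 := by
  intro h
  have : (![(0:ℂ), 1, 0] : V3) 1 = 0 := by rw [h]; rfl
  simp at this

lemma e2_ne_zero : (![0, 0, 1] : V3) ≠ 0 := by
  intro h
  have : (![(0:ℂ), 0, 1] : V3) 2 = 0 := by rw [h]; rfl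
  simp at this

/-- The explicit set of twelve singular subspaces. -/
def T : Set (Submodule ℂ V3) :=
  ((fun q : ℂ × ℂ => (sp ![q.1, q.2, 1])) '' (mu3 ×ˢ mu3)) ∪
    {(sp ![1, 0, 0]), (sp ![0, 1, 0]), (sp ![0, 0, 1])}

lemma sp_smul {v : V3} {c : ℂ} (hc : c ≠ 0) : sp (c • v) = sp v :=
  Submodule.span_singleton_smul_eq (IsUnit.mk0 c hc) v

lemma S_eq_T : {p : Submodule ℂ V3 | Module.finrank ℂ p = 1 ∧ 2 ≤ multP p} = T := by
  ext p
  simp only [Set.mem_setOf_eq]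
  constructor
  · rintro ⟨hrk, hm⟩
    obtain ⟨v, hv, rfl⟩ := exists_span hrk
    rw [multP_span] at hm
    rcases classification hv hm with ⟨h0, h1, h2'⟩ | ⟨h0, h1, h2'⟩ | ⟨h0, h1, h2'⟩ |
      ⟨h0, h1, h2', e01, e12⟩
    · have : v = v 2 • ![0, 0, 1] := funext fun i => by
        fin_cases i <;> simp [smul_apply', h0, h1]
      rw [this, sp_smul h2']
      exact Or.inr (Or.inr (Or.inr rfl))
    · have : v = v 0 • ![1, 0, 0] := funext fun i => by
        fin_cases i <;> simp [smul_apply', h1, h2']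
      rw [this, sp_smul h0]
      exact Or.inr (Or.inl rfl)
    · have : v = v 1 • ![0, 1, 0] := funext fun i => by
        fin_cases i <;> simp [smul_apply', h0, h2']
      rw [this, sp_smul h1]
      exact Or.inr (Or.inr (Or.inl rfl))
    · have hveq : v = v 2 • ![v 0 / v 2, v 1 / v 2, 1] := by
        funext i
        fin_cases i
        · show v 0 = v 2 * (v 0 / v 2); field_simp
        · show v 1 = v 2 * (v 1 / v 2); field_simp
        · show v 2 = v 2 * 1; ring
      refine Or.inl ⟨(v 0 / v 2, v 1 / v 2), ⟨?_, ?_⟩, ?_⟩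
      · show (v 0 / v 2) ^ 3 = 1
        rw [div_pow, e01, e12, div_self (pow_ne_zero 3 h2')]
      · show (v 1 / v 2) ^ 3 = 1
        rw [div_pow, e12, div_self (pow_ne_zero 3 h2')]
      · show sp ![v 0 / v 2, v 1 / v 2, 1] = sp v
        conv_rhs => rw [hveq]
        rw [sp_smul h2']
  · rintro (⟨⟨α, β⟩, ⟨hα, hβ⟩, rfl⟩ | rfl | rfl | rfl)
    · refine ⟨finrank_span_singleton vec_ne_zero, ?_⟩
      rw [multP_span]
      have hα0 : α ≠ 0 := mu3_ne_zero hα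
      have hβ0 : β ≠ 0 := mu3_ne_zero hβ
      have h0 : (![α, β, 1] : V3) 0 = α := rfl
      have h1 : (![α, β, 1] : V3) 1 = β := rfl
      have h2 : (![α, β, 1] : V3) 2 = 1 := rfl
      have := ncard_M_eq_three (v := ![α, β, 1]) vec_ne_zero
      rw [M_caseB (v := ![α, β, 1]) (by rw [h0]; exact hα0) (by rw [h1]; exact hβ0)
        (by rw [h2]; exact one_ne_zero) (by rw [h0, h1, hα, hβ])
        (by rw [h1, h2, hβ, one_pow]),
        ncard_caseB (by rw [h1, h2]; simpa using hβ0) (by rw [h0, h2]; simpa using hα0)]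
      norm_num
    · refine ⟨finrank_span_singleton e0_ne_zero, ?_⟩
      rw [multP_span, M_caseA_yz (v := ![1, 0, 0]) (by norm_num) rfl rfl,
        Set.ncard_image_of_injective _ Hyz_inj, mu3_ncard]
      norm_num
    · refine ⟨finrank_span_singleton e1_ne_zero, ?_⟩
      rw [multP_span, M_caseA_xz (v := ![0, 1, 0]) rfl (by norm_num) rfl,
        Set.ncard_image_of_injective _ Hxz_inj, mu3_ncard]
      norm_num
    · refine ⟨finrank_span_singleton e2_ne_zero, ?_⟩
      rw [multP_span, M_caseA_xy (v := ![0, 0, 1]) rfl rfl (by simp),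
        Set.ncard_image_of_injective _ Hxy_inj, mu3_ncard]
      norm_num

lemma T_ncard : T.ncard = 12 := by
  have hinj : Set.InjOn (fun q : ℂ × ℂ => (sp ![q.1, q.2, 1])) (mu3 ×ˢ mu3) := by
    rintro ⟨a, b⟩ _ ⟨a', b'⟩ _ h
    obtain ⟨c, hc⟩ := span_eq_cases h.symm
    have hc2 : c * 1 = 1 := congrFun hc 2
    rw [mul_one] at hc2
    have hc0 : c * a = a' := congrFun hc 0
    have hc1 : c * b = b' := congrFun hc 1
    rw [hc2, one_mul] at hc0 hc1
    exact Prod.ext hc0 hc1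
  have hAfin : ((fun q : ℂ × ℂ => (sp ![q.1, q.2, 1])) '' (mu3 ×ˢ mu3)).Finite :=
    ((mu3_finite.prod mu3_finite).image _)
  have hA : ((fun q : ℂ × ℂ => (sp ![q.1, q.2, 1])) '' (mu3 ×ˢ mu3)).ncard = 9 := by
    rw [Set.ncard_image_of_injOn hinj]
    have : (mu3 ×ˢ mu3 : Set (ℂ × ℂ)) =
        ↑((Polynomial.nthRootsFinset 3 (1 : ℂ)) ×ˢ (Polynomial.nthRootsFinset 3 (1 : ℂ))) := by
      rw [Finset.coe_product, mu3_eq]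
    rw [this, Set.ncard_coe_finset, Finset.card_product,
      (Complex.isPrimitiveRoot_exp 3 (by norm_num)).card_nthRootsFinset]
  have he01 : (sp ![1, 0, 0]) ≠ (sp ![0, 1, 0]) := by
    intro h
    obtain ⟨c, hc⟩ := span_eq_cases h
    have := congrFun hc 0
    simp [smul_apply'] at this
  have he02 : (sp ![1, 0, 0]) ≠ (sp ![0, 0, 1]) := by
    intro h
    obtain ⟨c, hc⟩ := span_eq_cases h
    have := congrFun hc 0
    simp [smul_apply'] at this
  have he12 : (sp ![0, 1, 0]) ≠ (sp ![0, 0, 1]) := by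
    intro h
    obtain ⟨c, hc⟩ := span_eq_cases h
    have := congrFun hc 1
    simp [smul_apply'] at this
  have hB : ({(sp ![1, 0, 0]), (sp ![0, 1, 0]), (sp ![0, 0, 1])} :
      Set (Submodule ℂ V3)).ncard = 3 := by
    rw [Set.ncard_insert_of_notMem (by rintro (h | h); exacts [he01 h, he02 h])
      ((Set.finite_singleton _).insert _), Set.ncard_pair he12]
  have hdisj : Disjoint ((fun q : ℂ × ℂ => (sp ![q.1, q.2, 1])) '' (mu3 ×ˢ mu3))
      ({(sp ![1, 0, 0]), (sp ![0, 1, 0]), (sp ![0, 0, 1])} : Set (Submodule ℂ V3)) := by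
    rw [Set.disjoint_right]
    rintro p (rfl | rfl | rfl) ⟨⟨a, b⟩, hab, h⟩
    · obtain ⟨c, hc⟩ := span_eq_cases h
      have h2 := congrFun hc 2
      simp [smul_apply'] at h2
    · obtain ⟨c, hc⟩ := span_eq_cases h
      have h2 := congrFun hc 2
      simp [smul_apply'] at h2
    · obtain ⟨c, hc⟩ := span_eq_cases h
      have h0 := congrFun hc 0
      simp [smul_apply'] at h0
      exact mu3_ne_zero hab.1 h0.symm
  rw [T, Set.ncard_union_eq hdisj hAfin (((Set.finite_singleton _).insert _).insert _), hA, hB]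

theorem stmt19 :
    (∀ p : Submodule ℂ V3, Module.finrank ℂ p = 1 → 2 ≤ multP p → multP p = 3) ∧
    {p : Submodule ℂ V3 | Module.finrank ℂ p = 1 ∧ 2 ≤ multP p}.ncard = 12 := by
  constructor
  · intro p hrk hm
    obtain ⟨v, hv, rfl⟩ := exists_span hrk
    rw [multP_span] at hm ⊢
    exact ncard_M_eq_three hv hm
  · rw [S_eq_T, T_ncard]

end G31Lines
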